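/- For (b,c,d,f,g,i) ∈ ℂ⁶ and q = q(b,c,d,f,g,i), one has dim 𝓩_q = 6 if and only if (b,c,d,f,g,i) = (0,0,0,0,0,0). -/
import Mathlib


open Matrix

noncomputable section

/-- The Lie algebra 𝔤 ≅ sp₄(ℂ), realized as the space of 4×4 complex matrices
with rows (A,B,C,D), (E,F,G,C), (H,I,−F,−B), (J,H,−E,−A). -/
def sp4 : Submodule ℂ (Matrix (Fin 4) (Fin 4) ℂ) where
  carrier := {M | M 1 3 = M 0 2 ∧ M 2 2 = -M 1 1 ∧ M 2 3 = -M 0 1 ∧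
    M 3 1 = M 2 0 ∧ M 3 2 = -M 1 0 ∧ M 3 3 = -M 0 0}
  add_mem' := by
    rintro a b ⟨h1, h2, h3, h4, h5, h6⟩ ⟨k1, k2, k3, k4, k5, k6⟩
    simp only [Set.mem_setOf_eq, Matrix.add_apply, h1, h2, h3, h4, h5, h6,
      k1, k2, k3, k4, k5, k6]
    refine ⟨?_, ?_, ?_, ?_, ?_, ?_⟩ <;> first | trivial | ring
  zero_mem' := by
    simp [Set.mem_setOf_eq]
  smul_mem' := by
    rintro c a ⟨h1, h2, h3, h4, h5, h6⟩
    simp only [Set.mem_setOf_eq, Matrix.smul_apply, h1, h2, h3, h4, h5, h6, smul_eq_mul]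
    refine ⟨?_, ?_, ?_, ?_, ?_, ?_⟩ <;> first | trivial | ring

/-- Matrices commuting with a given matrix `q`. -/
def commWith (q : Matrix (Fin 4) (Fin 4) ℂ) : Submodule ℂ (Matrix (Fin 4) (Fin 4) ℂ) where
  carrier := {z | z * q = q * z}
  add_mem' := by
    intro a b ha hb
    simp only [Set.mem_setOf_eq] at *
    rw [add_mul, mul_add, ha, hb]
  zero_mem' := by simp
  smul_mem' := by
    intro c a ha
    simp only [Set.mem_setOf_eq] at *
    rw [smul_mul_assoc, mul_smul_comm, ha]

/-- The centralizer 𝓩_q = {z ∈ 𝔤 : zq = qz}, a ℂ-subspace of 𝔤. -/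
def cent (q : Matrix (Fin 4) (Fin 4) ℂ) : Submodule ℂ (Matrix (Fin 4) (Fin 4) ℂ) :=
  sp4 ⊓ commWith q

/-- The element q(b,c,d,f,g,i) of the Slodowy slice. -/
def qmat (b c d f g i : ℂ) : Matrix (Fin 4) (Fin 4) ℂ :=
  !![0, b, c, d; 0, f, g, c; 0, i, -f, -b; 1, 0, 0, 0]


set_option linter.unreachableTactic false
set_option linter.unusedTactic false

lemma mem_cent_iff {q z : Matrix (Fin 4) (Fin 4) ℂ} :
    z ∈ cent q ↔ (z ∈ sp4 ∧ z * q = q * z) := Iff.rfl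

lemma cent_zero (b c d f g i : ℂ) {z : Matrix (Fin 4) (Fin 4) ℂ}
    (hz : z ∈ cent (qmat b c d f g i))
    (h10 : z 1 0 = 0) (h11 : z 1 1 = 0) (h12 : z 1 2 = 0)
    (h20 : z 2 0 = 0) (h21 : z 2 1 = 0) (h30 : z 3 0 = 0) : z = 0 := by
  obtain ⟨⟨s1, s2, s3, s4, s5, s6⟩, hc⟩ := mem_cent_iff.mp hz
  have e30 := congrFun (congrFun hc 3) 0
  have e00 := congrFun (congrFun hc 0) 0
  have e10 := congrFun (congrFun hc 1) 0
  have e20 := congrFun (congrFun hc 2) 0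
  simp [Matrix.mul_apply, Fin.sum_univ_four, qmat, h10, h11, h12, h20, h21, h30]
    at e30 e00 e10 e20
  have h00 : z 0 0 = 0 := by linear_combination (s6 - e30) / 2
  have h02 : z 0 2 = 0 := by rw [← s1]; exact e10
  have h01 : z 0 1 = 0 := by linear_combination s3 - e20
  ext r s
  fin_cases r <;> fin_cases s <;>
    simp [h00, h01, h02, e00, h10, h11, h12, e10, h20, h21, s2, s3, e20, h30, s4, s5, s6]

def pick5 (q : Matrix (Fin 4) (Fin 4) ℂ) (p : Fin 5 → Fin 4 × Fin 4) :
    cent q →ₗ[ℂ] (Fin 5 → ℂ) where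
  toFun z j := (z : Matrix (Fin 4) (Fin 4) ℂ) (p j).1 (p j).2
  map_add' x y := by funext j; simp
  map_smul' a x := by funext j; simp

lemma finrank_le_five {q : Matrix (Fin 4) (Fin 4) ℂ} (p : Fin 5 → Fin 4 × Fin 4)
    (h : ∀ z ∈ cent q, (∀ j, z (p j).1 (p j).2 = 0) → z = 0) :
    Module.finrank ℂ (cent q) ≤ 5 := by
  have hinj : Function.Injective (pick5 q p) := by
    rw [← LinearMap.ker_eq_bot, LinearMap.ker_eq_bot']
    intro m hm
    ext1
    exact h m m.2 fun j => congrFun hm j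
  calc Module.finrank ℂ (cent q) ≤ Module.finrank ℂ (Fin 5 → ℂ) :=
        LinearMap.finrank_le_finrank_of_injective hinj
    _ = 5 := Module.finrank_fin_fun ℂ

section cases
variable (b c d f g i : ℂ)

lemma case_b (hb : b ≠ 0) : Module.finrank ℂ (cent (qmat b c d f g i)) ≤ 5 := by
  apply finrank_le_five ![(1,1),(1,2),(2,0),(2,1),(3,0)]
  intro z hz hj
  have h11 : z 1 1 = 0 := by simpa using hj 0
  have h12 : z 1 2 = 0 := by simpa using hj 1
  have h20 : z 2 0 = 0 := by simpa using hj 2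
  have h21 : z 2 1 = 0 := by simpa using hj 3
  have h30 : z 3 0 = 0 := by simpa using hj 4
  obtain ⟨⟨s1, s2, s3, s4, s5, s6⟩, hc⟩ := mem_cent_iff.mp hz
  have e11 := congrFun (congrFun hc 1) 1
  simp [Matrix.mul_apply, Fin.sum_univ_four, qmat, h11, h12, h20, h21, h30, s4] at e11
  exact cent_zero b c d f g i hz (e11.resolve_right hb) h11 h12 h20 h21 h30

lemma case_c (hcc : c ≠ 0) : Module.finrank ℂ (cent (qmat b c d f g i)) ≤ 5 := by
  apply finrank_le_five ![(1,1),(1,2),(2,0),(2,1),(3,0)]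
  intro z hz hj
  have h11 : z 1 1 = 0 := by simpa using hj 0
  have h12 : z 1 2 = 0 := by simpa using hj 1
  have h20 : z 2 0 = 0 := by simpa using hj 2
  have h21 : z 2 1 = 0 := by simpa using hj 3
  have h30 : z 3 0 = 0 := by simpa using hj 4
  obtain ⟨⟨s1, s2, s3, s4, s5, s6⟩, hc⟩ := mem_cent_iff.mp hz
  have e12 := congrFun (congrFun hc 1) 2
  simp [Matrix.mul_apply, Fin.sum_univ_four, qmat, h11, h12, h20, h21, h30, s2, s5] at e12
  have h10 : z 1 0 = 0 :=
    (mul_eq_zero.mp (show c * z 1 0 = 0 by linear_combination e12 / 2)).resolve_left hcc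
  exact cent_zero b c d f g i hz h10 h11 h12 h20 h21 h30

lemma case_d (hb : b = 0) (hcc : c = 0) (hf : f = 0) (hg : g = 0) (hi : i = 0)
    (hd : d ≠ 0) : Module.finrank ℂ (cent (qmat b c d f g i)) ≤ 5 := by
  subst hb hcc hf hg hi
  apply finrank_le_five ![(1,1),(1,2),(2,0),(2,1),(3,0)]
  intro z hz hj
  have h11 : z 1 1 = 0 := by simpa using hj 0
  have h12 : z 1 2 = 0 := by simpa using hj 1
  have h20 : z 2 0 = 0 := by simpa using hj 2
  have h21 : z 2 1 = 0 := by simpa using hj 3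
  have h30 : z 3 0 = 0 := by simpa using hj 4
  obtain ⟨⟨s1, s2, s3, s4, s5, s6⟩, hc⟩ := mem_cent_iff.mp hz
  have e02 := congrFun (congrFun hc 0) 2
  simp [Matrix.mul_apply, Fin.sum_univ_four, qmat, s5] at e02
  have h10 : z 1 0 = 0 := e02.resolve_left hd
  exact cent_zero 0 0 d 0 0 0 hz h10 h11 h12 h20 h21 h30

lemma case_f (hf : f ≠ 0) : Module.finrank ℂ (cent (qmat b c d f g i)) ≤ 5 := by
  apply finrank_le_five ![(1,0),(1,1),(2,0),(2,1),(3,0)]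
  intro z hz hj
  have h10 : z 1 0 = 0 := by simpa using hj 0
  have h11 : z 1 1 = 0 := by simpa using hj 1
  have h20 : z 2 0 = 0 := by simpa using hj 2
  have h21 : z 2 1 = 0 := by simpa using hj 3
  have h30 : z 3 0 = 0 := by simpa using hj 4
  obtain ⟨⟨s1, s2, s3, s4, s5, s6⟩, hc⟩ := mem_cent_iff.mp hz
  have e12 := congrFun (congrFun hc 1) 2
  simp [Matrix.mul_apply, Fin.sum_univ_four, qmat, h10, h11, h20, h21, h30, s2, s5] at e12
  have h12 : z 1 2 = 0 :=
    (mul_eq_zero.mp (show f * z 1 2 = 0 by linear_combination -e12 / 2)).resolve_left hf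
  exact cent_zero b c d f g i hz h10 h11 h12 h20 h21 h30

lemma case_g (hg : g ≠ 0) : Module.finrank ℂ (cent (qmat b c d f g i)) ≤ 5 := by
  apply finrank_le_five ![(1,0),(1,1),(1,2),(2,0),(3,0)]
  intro z hz hj
  have h10 : z 1 0 = 0 := by simpa using hj 0
  have h11 : z 1 1 = 0 := by simpa using hj 1
  have h12 : z 1 2 = 0 := by simpa using hj 2
  have h20 : z 2 0 = 0 := by simpa using hj 3
  have h30 : z 3 0 = 0 := by simpa using hj 4
  obtain ⟨⟨s1, s2, s3, s4, s5, s6⟩, hc⟩ := mem_cent_iff.mp hz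
  have e11 := congrFun (congrFun hc 1) 1
  simp [Matrix.mul_apply, Fin.sum_univ_four, qmat, h10, h11, h12, h20, h30, s4] at e11
  have h21 : z 2 1 = 0 := e11.resolve_left hg
  exact cent_zero b c d f g i hz h10 h11 h12 h20 h21 h30

lemma case_i (hi : i ≠ 0) : Module.finrank ℂ (cent (qmat b c d f g i)) ≤ 5 := by
  apply finrank_le_five ![(1,0),(1,2),(2,0),(2,1),(3,0)]
  intro z hz hj
  have h10 : z 1 0 = 0 := by simpa using hj 0
  have h12 : z 1 2 = 0 := by simpa using hj 1
  have h20 : z 2 0 = 0 := by simpa using hj 2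
  have h21 : z 2 1 = 0 := by simpa using hj 3
  have h30 : z 3 0 = 0 := by simpa using hj 4
  obtain ⟨⟨s1, s2, s3, s4, s5, s6⟩, hc⟩ := mem_cent_iff.mp hz
  have e21 := congrFun (congrFun hc 2) 1
  simp [Matrix.mul_apply, Fin.sum_univ_four, qmat, h10, h12, h20, h21, h30, s2, s4] at e21
  have h11 : z 1 1 = 0 :=
    (mul_eq_zero.mp (show i * z 1 1 = 0 by linear_combination -e21 / 2)).resolve_left hi
  exact cent_zero b c d f g i hz h10 h11 h12 h20 h21 h30
end cases

def bmat (v : Fin 6 → ℂ) : Matrix (Fin 4) (Fin 4) ℂ :=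
  !![0, 0, 0, 0; v 0, v 1, v 2, 0; v 3, v 4, -v 1, 0; v 5, v 3, -v 0, 0]

lemma bmat_mem (v : Fin 6 → ℂ) : bmat v ∈ cent (qmat 0 0 0 0 0 0) := by
  refine mem_cent_iff.mpr ⟨⟨?_, ?_, ?_, ?_, ?_, ?_⟩, ?_⟩
  case _ => simp [bmat, Matrix.vecHead, Matrix.vecTail]
  case _ => simp [bmat, Matrix.vecHead, Matrix.vecTail]
  case _ => simp [bmat, Matrix.vecHead, Matrix.vecTail]
  case _ => simp [bmat, Matrix.vecHead, Matrix.vecTail]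
  case _ => simp [bmat, Matrix.vecHead, Matrix.vecTail]
  case _ => simp [bmat, Matrix.vecHead, Matrix.vecTail]
  case _ =>
    ext r s
    fin_cases r <;> fin_cases s <;>
      simp [bmat, qmat, Matrix.mul_apply, Fin.sum_univ_four]

def equiv6 : (Fin 6 → ℂ) ≃ₗ[ℂ] cent (qmat 0 0 0 0 0 0) where
  toFun v := ⟨bmat v, bmat_mem v⟩
  map_add' u v := by
    apply Subtype.ext
    ext r s
    fin_cases r <;> fin_cases s <;> simp [bmat] <;> ring
  map_smul' a v := by
    apply Subtype.ext
    ext r s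
    fin_cases r <;> fin_cases s <;> simp [bmat] <;> ring
  invFun z := ![z.1 1 0, z.1 1 1, z.1 1 2, z.1 2 0, z.1 2 1, z.1 3 0]
  left_inv v := by
    funext j
    fin_cases j <;> simp [bmat, Matrix.cons_val_succ, show (5 : Fin 6) = (4 : Fin 5).succ from rfl]
  right_inv z := by
    apply Subtype.ext
    have hmem : z.1 - bmat ![z.1 1 0, z.1 1 1, z.1 1 2, z.1 2 0, z.1 2 1, z.1 3 0] ∈
        cent (qmat 0 0 0 0 0 0) := Submodule.sub_mem _ z.2 (bmat_mem _)
    have h := cent_zero 0 0 0 0 0 0 hmem (by simp [bmat, Matrix.cons_val_succ, show (5 : Fin 6) = (4 : Fin 5).succ from rfl]) (by simp [bmat, Matrix.cons_val_succ, show (5 : Fin 6) = (4 : Fin 5).succ from rfl]) (by simp [bmat, Matrix.cons_val_succ, show (5 : Fin 6) = (4 : Fin 5).succ from rfl])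
      (by simp [bmat, Matrix.cons_val_succ, show (5 : Fin 6) = (4 : Fin 5).succ from rfl]) (by simp [bmat, Matrix.cons_val_succ, show (5 : Fin 6) = (4 : Fin 5).succ from rfl]) (by simp [bmat, Matrix.cons_val_succ, show (5 : Fin 6) = (4 : Fin 5).succ from rfl])
    exact (sub_eq_zero.mp h).symm

theorem slice_dim_six (b c d f g i : ℂ) :
    Module.finrank ℂ (cent (qmat b c d f g i)) = 6 ↔
      (b = 0 ∧ c = 0 ∧ d = 0 ∧ f = 0 ∧ g = 0 ∧ i = 0) := by
  constructor
  · intro h6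
    have hb : b = 0 := by
      by_contra hb; have := case_b b c d f g i hb; omega
    have hcc : c = 0 := by
      by_contra hcc; have := case_c b c d f g i hcc; omega
    have hf : f = 0 := by
      by_contra hf; have := case_f b c d f g i hf; omega
    have hg : g = 0 := by
      by_contra hg; have := case_g b c d f g i hg; omega
    have hi : i = 0 := by
      by_contra hi; have := case_i b c d f g i hi; omega
    have hd : d = 0 := by
      by_contra hd; have := case_d b c d f g i hb hcc hf hg hi hd; omega
    exact ⟨hb, hcc, hd, hf, hg, hi⟩
  · rintro ⟨rfl, rfl, rfl, rfl, rfl, rfl⟩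
    rw [← equiv6.finrank_eq]
    exact Module.finrank_fin_fun ℂ

end
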